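/- For any constants C > 0 and a ≠ 0, the function u(x,t) = 4·arctan(C·exp(a·x + t/a)) satisfies u_x = 2a·sin(u/2) and u_t = (2/a)·sin(u/2). -/

import Mathlib

/-- Partial derivative with respect to the first variable (x). -/
noncomputable def px (f : ℝ → ℝ → ℝ) (x t : ℝ) : ℝ :=
  deriv (fun x' => f x' t) x

/-- Partial derivative with respect to the second variable (t). -/
noncomputable def pt (f : ℝ → ℝ → ℝ) (x t : ℝ) : ℝ :=
  deriv (fun t' => f x t') t

lemma sin_two_arctan (E : ℝ) : Real.sin (2 * Real.arctan E) = 2 * E / (1 + E ^ 2) := by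
  have h : (0:ℝ) < 1 + E ^ 2 := by positivity
  rw [Real.sin_two_mul, Real.sin_arctan, Real.cos_arctan]
  have hs : Real.sqrt (1 + E ^ 2) * Real.sqrt (1 + E ^ 2) = 1 + E ^ 2 :=
    Real.mul_self_sqrt h.le
  have hs0 : Real.sqrt (1 + E ^ 2) ≠ 0 := by positivity
  field_simp
  rw [Real.sq_sqrt h.le]

theorem stmt_10 (a C : ℝ) (ha : a ≠ 0) (hC : C > 0) (u : ℝ → ℝ → ℝ)
    (hu : u = fun x t => 4 * Real.arctan (C * Real.exp (a * x + t / a))) :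
    (∀ x t, px u x t = 2 * a * Real.sin (u x t / 2)) ∧
    (∀ x t, pt u x t = (2 / a) * Real.sin (u x t / 2)) := by
  subst hu
  constructor
  · intro x t
    set E := C * Real.exp (a * x + t / a) with hE
    have hpos : (0:ℝ) < 1 + E ^ 2 := by positivity
    have h1 : HasDerivAt (fun x' : ℝ => a * x' + t / a) a x := by
      simpa using ((hasDerivAt_id x).const_mul a).add_const (t / a)
    have h2 := (Real.hasDerivAt_exp (a * x + t / a)).comp x h1
    have h3 := h2.const_mul C
    have h4 := (Real.hasDerivAt_arctan (C * Real.exp (a * x + t / a))).comp x h3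
    have h5 := h4.const_mul 4
    have hd : px (fun x t => 4 * Real.arctan (C * Real.exp (a * x + t / a))) x t
        = 4 * ((1 + E ^ 2)⁻¹ * (C * (Real.exp (a * x + t / a) * a))) := by
      simpa [px, hE] using h5.deriv
    rw [hd]
    have : (4 : ℝ) * Real.arctan E / 2 = 2 * Real.arctan E := by ring
    rw [this, sin_two_arctan]
    rw [show C * (Real.exp (a * x + t / a) * a) = E * a by rw [hE]; ring]
    field_simp
    ring
  · intro x t
    set E := C * Real.exp (a * x + t / a) with hE
    have hpos : (0:ℝ) < 1 + E ^ 2 := by positivity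
    have h1 : HasDerivAt (fun t' : ℝ => a * x + t' / a) (1 / a) t := by
      simpa using ((hasDerivAt_id t).div_const a).const_add (a * x)
    have h2 := (Real.hasDerivAt_exp (a * x + t / a)).comp t h1
    have h3 := h2.const_mul C
    have h4 := (Real.hasDerivAt_arctan (C * Real.exp (a * x + t / a))).comp t h3
    have h5 := h4.const_mul 4
    have hd : pt (fun x t => 4 * Real.arctan (C * Real.exp (a * x + t / a))) x t
        = 4 * ((1 + E ^ 2)⁻¹ * (C * (Real.exp (a * x + t / a) * (1 / a)))) := by
      simpa [pt, hE] using h5.deriv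
    rw [hd]
    have : (4 : ℝ) * Real.arctan E / 2 = 2 * Real.arctan E := by ring
    rw [this, sin_two_arctan]
    rw [show C * (Real.exp (a * x + t / a) * (1 / a)) = E * (1 / a) by rw [hE]; ring]
    field_simp
    ring
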